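/- arXiv:2002.11994 — 6 statements merged into one kernel-verified Lean document; each statement's English description precedes it below -/
import Mathlib

section
/- The relative entropy controls the squared deviation of the diffuse normal from ξ with weight |∇ψ|: ∫_{ℝ^d} |n − ξ|² |∇ψ| dx ≤ 2 E[u|ξ]. -/
open MeasureTheory Set
open scoped RealInnerProductSpace

noncomputable section

/-- `∇ψ` for `ψ(x) = ∫_0^{u x} √(2 W s) ds`, namely `√(2 W (u x)) ∇u(x)`. -/
def gradPsi {d : ℕ} (W : ℝ → ℝ) (u : EuclideanSpace ℝ (Fin d) → ℝ)
    (x : EuclideanSpace ℝ (Fin d)) : EuclideanSpace ℝ (Fin d) :=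
  Real.sqrt (2 * W (u x)) • gradient u x

/-- The relative entropy `E[u|ξ]`. -/
def relEntropy {d : ℕ} (ε : ℝ) (W : ℝ → ℝ) (u : EuclideanSpace ℝ (Fin d) → ℝ)
    (ξ : EuclideanSpace ℝ (Fin d) → EuclideanSpace ℝ (Fin d)) : ℝ :=
  ∫ x, (ε / 2 * ‖gradient u x‖ ^ 2 + ε⁻¹ * W (u x) - ⟪ξ x, gradPsi W u x⟫)

/-- The relative entropy controls the squared deviation of the diffuse normal from `ξ`
with weight `|∇ψ|`. -/
theorem entropy_controls_tilt
    (d : ℕ) (hd : 1 ≤ d) (ε : ℝ) (hε : 0 < ε)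
    (W : ℝ → ℝ) (hW : Continuous W) (hWnonneg : ∀ s, 0 ≤ W s)
    (u : EuclideanSpace ℝ (Fin d) → ℝ) (hu : ContDiff ℝ 1 u)
    (henergy : Integrable (fun x => ε / 2 * ‖gradient u x‖ ^ 2 + ε⁻¹ * W (u x)))
    (n : EuclideanSpace ℝ (Fin d) → EuclideanSpace ℝ (Fin d))
    (hn : ∀ x, ‖n x‖ = 1)
    (hn' : ∀ x, gradient u x ≠ 0 → n x = ‖gradient u x‖⁻¹ • gradient u x)
    (ξ : EuclideanSpace ℝ (Fin d) → EuclideanSpace ℝ (Fin d))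
    (hξmeas : Measurable ξ) (hξ : ∀ x, ‖ξ x‖ ≤ 1)
    (hξψ : Integrable (fun x => ⟪ξ x, gradPsi W u x⟫)) :
    (∫ x, ‖n x - ξ x‖ ^ 2 * ‖gradPsi W u x‖) ≤ 2 * relEntropy ε W u ξ := by
  set g : EuclideanSpace ℝ (Fin d) → ℝ := fun x =>
    2 * (ε / 2 * ‖gradient u x‖ ^ 2 + ε⁻¹ * W (u x) - ⟪ξ x, gradPsi W u x⟫) with hg
  have hgint : Integrable g := (henergy.sub hξψ).const_mul 2
  have hpoint : ∀ x, ‖n x - ξ x‖ ^ 2 * ‖gradPsi W u x‖ ≤ g x := by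
    intro x
    set G := gradient u x with hG
    set s := Real.sqrt (2 * W (u x)) with hs
    have hs0 : 0 ≤ s := Real.sqrt_nonneg _
    have hs2 : s ^ 2 = 2 * W (u x) :=
      Real.sq_sqrt (mul_nonneg (by norm_num) (hWnonneg _))
    have hpsi : gradPsi W u x = s • G := rfl
    have hnorm : ‖gradPsi W u x‖ = s * ‖G‖ := by
      rw [hpsi, norm_smul, Real.norm_of_nonneg hs0]
    have hip : ⟪ξ x, gradPsi W u x⟫ = s * ⟪ξ x, G⟫ := by
      rw [hpsi, real_inner_smul_right]
    have hξ2 : ‖ξ x‖ ^ 2 ≤ 1 := by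
      have := hξ x
      nlinarith [norm_nonneg (ξ x)]
    have hgx : g x = 2 * (ε / 2 * ‖G‖ ^ 2 + ε⁻¹ * W (u x) - s * ⟪ξ x, G⟫) := by
      simp only [hg]; rw [hip]
    by_cases hGz : G = 0
    · have hpz : gradPsi W u x = 0 := by rw [hpsi, hGz, smul_zero]
      rw [hpz, hgx, hGz]
      simp only [norm_zero, mul_zero, inner_zero_right]
      nlinarith [hWnonneg (u x), sq_nonneg ‖(0 : EuclideanSpace ℝ (Fin d))‖,
        mul_nonneg (inv_nonneg.mpr hε.le) (hWnonneg (u x))]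
    · have hn'' := hn' x hGz
      have hGpos : 0 < ‖G‖ := norm_pos_iff.mpr hGz
      have hexp : ‖n x - ξ x‖ ^ 2 = ‖n x‖ ^ 2 - 2 * ⟪n x, ξ x⟫ + ‖ξ x‖ ^ 2 := by
        rw [@norm_sub_sq_real]
      have hinn : ⟪n x, ξ x⟫ * ‖G‖ = ⟪ξ x, G⟫ := by
        rw [hn'', real_inner_smul_left, real_inner_comm]
        field_simp
        rw [← hG, mul_div_assoc, div_self hGpos.ne', mul_one]
      have hamgm : 2 * (s * ‖G‖) ≤ ε * ‖G‖ ^ 2 + ε⁻¹ * (2 * W (u x)) := by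
        rw [← hs2]
        have h1 : ε⁻¹ * s ^ 2 = s ^ 2 / ε := by ring
        rw [h1, ← sub_nonneg]
        have : ε * ‖G‖ ^ 2 + s ^ 2 / ε - 2 * (s * ‖G‖) = (ε * ‖G‖ - s) ^ 2 / ε := by
          field_simp; ring
        rw [this]
        positivity
      rw [hnorm, hexp, hn x, hgx]
      nlinarith [mul_nonneg hs0 hGpos.le, hinn, hξ2, hamgm,
        mul_le_mul_of_nonneg_left hξ2 (mul_nonneg hs0 hGpos.le)]
  have hnn : ∀ x, 0 ≤ ‖n x - ξ x‖ ^ 2 * ‖gradPsi W u x‖ := fun x => by positivity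
  have hle : (∫ x, ‖n x - ξ x‖ ^ 2 * ‖gradPsi W u x‖) ≤ ∫ x, g x :=
    integral_mono_of_nonneg (Filter.Eventually.of_forall hnn) hgint
      (Filter.Eventually.of_forall hpoint)
  calc (∫ x, ‖n x - ξ x‖ ^ 2 * ‖gradPsi W u x‖) ≤ ∫ x, g x := hle
    _ = 2 * relEntropy ε W u ξ := by
        rw [hg, relEntropy, integral_const_mul]
end
end

section
/- The relative entropy controls the squared deviation of the diffuse normal from ξ with weight ε|∇u|²: ∫_{ℝ^d} |n − ξ|² ε |∇u|² dx ≤ 12 E[u|ξ]. -/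
open MeasureTheory Set
open scoped RealInnerProductSpace

noncomputable section

lemma key_pointwise {d : ℕ} (ε : ℝ) (hε : 0 < ε) (Wx : ℝ) (hWx : 0 ≤ Wx)
    (v nx ξx : EuclideanSpace ℝ (Fin d))
    (hn : ‖nx‖ = 1) (hn' : v ≠ 0 → nx = ‖v‖⁻¹ • v) (hξ : ‖ξx‖ ≤ 1) :
    ‖nx - ξx‖ ^ 2 * (ε * ‖v‖ ^ 2) ≤
      12 * (ε / 2 * ‖v‖ ^ 2 + ε⁻¹ * Wx - ⟪ξx, Real.sqrt (2 * Wx) • v⟫) := by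
  by_cases hv : v = 0
  · simp only [hv, smul_zero, inner_zero_right, norm_zero]
    have : (0:ℝ) ≤ ε⁻¹ * Wx := mul_nonneg (inv_nonneg.mpr hε.le) hWx
    nlinarith
  · have ha : 0 < ‖v‖ := norm_pos_iff.mpr hv
    set a := ‖v‖ with ha'
    set w := Real.sqrt (2 * Wx) with hw'
    have hw : 0 ≤ w := Real.sqrt_nonneg _
    have hw2 : w ^ 2 = 2 * Wx := Real.sq_sqrt (by linarith)
    have hv' : v = a • nx := by
      rw [hn' hv]; rw [smul_smul, mul_inv_cancel₀ ha.ne', one_smul]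
    set s := ⟪ξx, nx⟫ with hs'
    have hs : |s| ≤ 1 := by
      calc |s| ≤ ‖ξx‖ * ‖nx‖ := abs_real_inner_le_norm _ _
      _ ≤ 1 := by rw [hn]; simpa using hξ
    have hs1 : s ≤ 1 := (abs_le.mp hs).2
    have hs2 : -1 ≤ s := (abs_le.mp hs).1
    have hinner : ⟪ξx, w • v⟫ = w * (a * s) := by
      rw [hv', real_inner_smul_right, real_inner_smul_right]
    have hnorm : ‖nx - ξx‖ ^ 2 = 1 - 2 * s + ‖ξx‖ ^ 2 := by
      rw [norm_sub_sq_real, hn, real_inner_comm]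
      ring
    set c := ‖ξx‖ ^ 2 with hc'
    have hc : c ≤ 1 := by
      have := hξ
      nlinarith [norm_nonneg ξx]
    have hc0 : 0 ≤ c := sq_nonneg _
    have hWx' : Wx = w ^ 2 / 2 := by linarith
    rw [hinner, hnorm, hWx']
    rw [← mul_le_mul_iff_right₀ hε]
    have hei : ε * ε⁻¹ = 1 := mul_inv_cancel₀ hε.ne'
    nlinarith [mul_nonneg (by linarith : (0:ℝ) ≤ 1 + s) (sq_nonneg (ε * a - w)),
      mul_nonneg (mul_nonneg (by linarith : (0:ℝ) ≤ 1 - s) hε.le)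
        (mul_nonneg ha.le hw),
      mul_nonneg (by linarith : (0:ℝ) ≤ 1 - s) (sq_nonneg (ε * a)),
      mul_nonneg (by linarith : (0:ℝ) ≤ 1 - s) (sq_nonneg w),
      mul_nonneg (by linarith : (0:ℝ) ≤ 1 - c) (sq_nonneg (ε * a))]

/-- The relative entropy controls the squared deviation of the diffuse normal from `ξ`
with weight `ε |∇u|²`. -/
theorem entropy_controls_tilt_energy_weight
    (d : ℕ) (hd : 1 ≤ d) (ε : ℝ) (hε : 0 < ε)
    (W : ℝ → ℝ) (hW : Continuous W) (hWnonneg : ∀ s, 0 ≤ W s)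
    (u : EuclideanSpace ℝ (Fin d) → ℝ) (hu : ContDiff ℝ 1 u)
    (henergy : Integrable (fun x => ε / 2 * ‖gradient u x‖ ^ 2 + ε⁻¹ * W (u x)))
    (n : EuclideanSpace ℝ (Fin d) → EuclideanSpace ℝ (Fin d))
    (hn : ∀ x, ‖n x‖ = 1)
    (hn' : ∀ x, gradient u x ≠ 0 → n x = ‖gradient u x‖⁻¹ • gradient u x)
    (ξ : EuclideanSpace ℝ (Fin d) → EuclideanSpace ℝ (Fin d))
    (hξmeas : Measurable ξ) (hξ : ∀ x, ‖ξ x‖ ≤ 1)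
    (hξψ : Integrable (fun x => ⟪ξ x, gradPsi W u x⟫)) :
    (∫ x, ‖n x - ξ x‖ ^ 2 * (ε * ‖gradient u x‖ ^ 2)) ≤ 12 * relEntropy ε W u ξ := by
  set F : EuclideanSpace ℝ (Fin d) → ℝ := fun x =>
    ε / 2 * ‖gradient u x‖ ^ 2 + ε⁻¹ * W (u x) - ⟪ξ x, gradPsi W u x⟫ with hF
  have hFint : Integrable F := henergy.sub hξψ
  have h1 : (∫ x, ‖n x - ξ x‖ ^ 2 * (ε * ‖gradient u x‖ ^ 2)) ≤ ∫ x, 12 * F x := by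
    apply integral_mono_of_nonneg
    · filter_upwards with x
      positivity
    · exact hFint.const_mul 12
    · filter_upwards with x
      exact key_pointwise ε hε (W (u x)) (hWnonneg (u x)) (gradient u x) (n x) (ξ x)
        (hn x) (hn' x) (hξ x)
  calc (∫ x, ‖n x - ξ x‖ ^ 2 * (ε * ‖gradient u x‖ ^ 2)) ≤ ∫ x, 12 * F x := h1
    _ = 12 * relEntropy ε W u ξ := by rw [MeasureTheory.integral_const_mul]; rfl
end
end

section
/- The relative entropy controls the energy localized away from the interface: ∫_{ℝ^d} min{dist(x,I)², 1} ((ε/2)|∇u|² + ε^{-1} W(u)) dx ≤ (1 + 1/κ) E[u|ξ]. -/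
open MeasureTheory Set
open scoped RealInnerProductSpace

noncomputable section

/-- The relative entropy controls the energy localized away from the interface. -/
theorem entropy_controls_energy_away_from_interface
    (d : ℕ) (hd : 1 ≤ d) (ε : ℝ) (hε : 0 < ε)
    (W : ℝ → ℝ) (hW : Continuous W) (hWnonneg : ∀ s, 0 ≤ W s)
    (u : EuclideanSpace ℝ (Fin d) → ℝ) (hu : ContDiff ℝ 1 u)
    (henergy : Integrable (fun x => ε / 2 * ‖gradient u x‖ ^ 2 + ε⁻¹ * W (u x)))
    (n : EuclideanSpace ℝ (Fin d) → EuclideanSpace ℝ (Fin d))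
    (hn : ∀ x, ‖n x‖ = 1)
    (hn' : ∀ x, gradient u x ≠ 0 → n x = ‖gradient u x‖⁻¹ • gradient u x)
    (ξ : EuclideanSpace ℝ (Fin d) → EuclideanSpace ℝ (Fin d))
    (hξmeas : Measurable ξ) (hξ : ∀ x, ‖ξ x‖ ≤ 1)
    (hξψ : Integrable (fun x => ⟪ξ x, gradPsi W u x⟫))
    (I : Set (EuclideanSpace ℝ (Fin d))) (hIne : I.Nonempty) (hIcl : IsClosed I)
    (κ : ℝ) (hκ : κ ∈ Ioc (0:ℝ) 1)
    (hcoercive : ∀ x, κ * min (Metric.infDist x I ^ 2) 1 ≤ 1 - ‖ξ x‖) :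
    (∫ x, min (Metric.infDist x I ^ 2) 1 *
        (ε / 2 * ‖gradient u x‖ ^ 2 + ε⁻¹ * W (u x)))
      ≤ (1 + 1 / κ) * relEntropy ε W u ξ := by
  obtain ⟨hκ0, hκ1⟩ := hκ
  set e : EuclideanSpace ℝ (Fin d) → ℝ :=
    fun x => ε / 2 * ‖gradient u x‖ ^ 2 + ε⁻¹ * W (u x) with he
  have he_nonneg : ∀ x, 0 ≤ e x := fun x => by
    have := hWnonneg (u x)
    have : 0 ≤ ε⁻¹ * W (u x) := by positivity
    have : 0 ≤ ε / 2 * ‖gradient u x‖ ^ 2 := by positivity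
    simp only [he]; positivity
  -- pointwise facts
  have hm : ∀ x : EuclideanSpace ℝ (Fin d),
      0 ≤ min (Metric.infDist x I ^ 2) 1 ∧ min (Metric.infDist x I ^ 2) 1 ≤ 1 := by
    intro x
    constructor
    · exact le_min (by positivity) zero_le_one
    · exact min_le_right _ _
  have hp : ∀ x, ‖gradPsi W u x‖ = Real.sqrt (2 * W (u x)) * ‖gradient u x‖ := by
    intro x
    rw [gradPsi, norm_smul, Real.norm_eq_abs,
      abs_of_nonneg (Real.sqrt_nonneg _)]
  have hpe : ∀ x, ‖gradPsi W u x‖ ≤ e x := by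
    intro x
    rw [hp]
    set g := ‖gradient u x‖
    set r := Real.sqrt (2 * W (u x)) with hr
    have hr0 : 0 ≤ r := Real.sqrt_nonneg _
    have hr2 : r ^ 2 = 2 * W (u x) := by
      rw [hr, Real.sq_sqrt (by have := hWnonneg (u x); linarith)]
    have hg0 : 0 ≤ g := norm_nonneg _
    have h1 : 0 ≤ (ε * g - r) ^ 2 := sq_nonneg _
    have hε' : 0 < ε⁻¹ := by positivity
    show r * g ≤ ε / 2 * g ^ 2 + ε⁻¹ * W (u x)
    have hw : ε⁻¹ * W (u x) = ε⁻¹ * r ^ 2 / 2 := by rw [hr2]; ring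
    rw [hw]
    nlinarith [mul_nonneg hε'.le (sq_nonneg (ε * g - r)),
      mul_inv_cancel₀ (ne_of_gt hε)]
  have key : ∀ x, min (Metric.infDist x I ^ 2) 1 * e x
      ≤ (1 + 1 / κ) * (e x - ⟪ξ x, gradPsi W u x⟫) := by
    intro x
    obtain ⟨hm0, hm1⟩ := hm x
    have hs : ⟪ξ x, gradPsi W u x⟫ ≤ ‖ξ x‖ * ‖gradPsi W u x‖ :=
      real_inner_le_norm _ _
    have hpe' := hpe x
    have hco := hcoercive x
    have hξx := hξ x
    have hξx0 : 0 ≤ ‖ξ x‖ := norm_nonneg _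
    have hp0 : 0 ≤ ‖gradPsi W u x‖ := norm_nonneg _
    have he0 := he_nonneg x
    set m := min (Metric.infDist x I ^ 2) 1
    set t := ‖ξ x‖
    set p := ‖gradPsi W u x‖
    set s := ⟪ξ x, gradPsi W u x⟫
    have h1 : (1 - t) * p ≤ e x - s := by nlinarith
    have h2 : e x - p ≤ e x - s := by nlinarith
    have hA : m * (e x - p) ≤ e x - s :=
      le_trans (by nlinarith) h2
    have hB : κ * (m * p) ≤ e x - s := by
      have := mul_le_mul_of_nonneg_right hco hp0
      nlinarith
    have hfinal : κ * (m * e x) ≤ (κ + 1) * (e x - s) := by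
      nlinarith [mul_le_mul_of_nonneg_left hA hκ0.le]
    have hκne : κ ≠ 0 := ne_of_gt hκ0
    have habs : ∀ A : ℝ, ((κ + 1) * A) / κ = (1 + 1 / κ) * A := fun A => by
      field_simp
    calc m * e x = (κ * (m * e x)) / κ := by field_simp
      _ ≤ ((κ + 1) * (e x - s)) / κ := (div_le_div_iff_of_pos_right hκ0).mpr hfinal
      _ = (1 + 1 / κ) * (e x - s) := habs _
  -- continuity / measurability
  have hgrad_cont : Continuous (gradient u) := by
    have h1 : Continuous (fderiv ℝ u) := hu.continuous_fderiv one_ne_zero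
    exact (InnerProductSpace.toDual ℝ _).symm.continuous.comp h1
  have he_cont : Continuous e := by
    apply Continuous.add
    · exact continuous_const.mul ((hgrad_cont.norm).pow 2)
    · exact continuous_const.mul (hW.comp hu.continuous)
  have hmin_cont : Continuous fun x : EuclideanSpace ℝ (Fin d) =>
      min (Metric.infDist x I ^ 2) 1 :=
    ((Metric.continuous_infDist_pt I).pow 2).min continuous_const
  have hInt1 : Integrable (fun x => min (Metric.infDist x I ^ 2) 1 * e x) := by
    refine henergy.mono' (hmin_cont.mul he_cont).aestronglyMeasurable ?_
    filter_upwards with x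
    obtain ⟨hm0, hm1⟩ := hm x
    rw [Real.norm_eq_abs, abs_of_nonneg (mul_nonneg hm0 (he_nonneg x))]
    calc min (Metric.infDist x I ^ 2) 1 * e x ≤ 1 * e x :=
          mul_le_mul_of_nonneg_right hm1 (he_nonneg x)
      _ = e x := one_mul _
  have hInt2 : Integrable (fun x => e x - ⟪ξ x, gradPsi W u x⟫) := henergy.sub hξψ
  calc (∫ x, min (Metric.infDist x I ^ 2) 1 * e x)
      ≤ ∫ x, (1 + 1 / κ) * (e x - ⟪ξ x, gradPsi W u x⟫) :=
        integral_mono hInt1 (hInt2.const_mul _) key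
    _ = (1 + 1 / κ) * relEntropy ε W u ξ := by
        rw [integral_const_mul]; rfl
end
end

section
/- Estimate of the transport and tilt error terms: there exists a constant C = C(κ, Λ) < ∞, depending only on κ and Λ, such that ∫_{ℝ^d} ( |A : ((n−ξ) ⊗ (n−ξ))| + |tr A| (1 − ξ·n) + |(n−ξ)·V| + |g| ) |∇ψ| dx ≤ C E[u|ξ]. -/
open MeasureTheory Set
open scoped RealInnerProductSpace

noncomputable section

set_option maxHeartbeats 2000000 in
/-- Estimate of the transport and tilt error terms. The constant `C` depends only on
`d`, `κ` and `Λ`. -/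
theorem transport_and_tilt_error_estimate
    (d : ℕ) (hd : 1 ≤ d) (κ Λ : ℝ) (hκ : κ ∈ Ioc (0:ℝ) 1) (hΛ : 0 ≤ Λ) :
    ∃ C : ℝ, ∀ ε : ℝ, 0 < ε →
    ∀ W : ℝ → ℝ, Continuous W → (∀ s, 0 ≤ W s) →
    ∀ u : EuclideanSpace ℝ (Fin d) → ℝ, ContDiff ℝ 1 u →
      Integrable (fun x => ε / 2 * ‖gradient u x‖ ^ 2 + ε⁻¹ * W (u x)) →
    ∀ n : EuclideanSpace ℝ (Fin d) → EuclideanSpace ℝ (Fin d),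
      (∀ x, ‖n x‖ = 1) →
      (∀ x, gradient u x ≠ 0 → n x = ‖gradient u x‖⁻¹ • gradient u x) →
    ∀ ξ : EuclideanSpace ℝ (Fin d) → EuclideanSpace ℝ (Fin d),
      Measurable ξ → (∀ x, ‖ξ x‖ ≤ 1) →
      Integrable (fun x => ⟪ξ x, gradPsi W u x⟫) →
    ∀ I : Set (EuclideanSpace ℝ (Fin d)), I.Nonempty → IsClosed I →
      (∀ x, κ * min (Metric.infDist x I ^ 2) 1 ≤ 1 - ‖ξ x‖) →
    ∀ A : EuclideanSpace ℝ (Fin d) → Matrix (Fin d) (Fin d) ℝ,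
      (∀ i j, Measurable (fun x => A x i j)) → (∀ x i j, |A x i j| ≤ Λ) →
    ∀ V : EuclideanSpace ℝ (Fin d) → EuclideanSpace ℝ (Fin d),
      Measurable V → (∀ x, ‖V x‖ ≤ Λ * min (Metric.infDist x I) 1) →
    ∀ g : EuclideanSpace ℝ (Fin d) → ℝ,
      Measurable g → (∀ x, |g x| ≤ Λ * min (Metric.infDist x I ^ 2) 1) →
    (∫ x, (|∑ i, ∑ j, A x i j * (n x - ξ x) i * (n x - ξ x) j|
          + |Matrix.trace (A x)| * (1 - ⟪ξ x, n x⟫)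
          + |⟪n x - ξ x, V x⟫| + |g x|) * ‖gradPsi W u x‖)
      ≤ C * relEntropy ε W u ξ := by
  obtain ⟨hκ0, hκ1⟩ := hκ
  refine ⟨Λ * (3 * (d:ℝ) + 3) / κ, ?_⟩
  intro ε hε W hWc hW0 u hu hInt n hn1 hngrad ξ hξm hξ1 hξInt I hIne hIcl hκξ
    A hAm hAb V hVm hVb g hgm hgb
  set C := Λ * (3 * (d:ℝ) + 3) / κ with hC
  set e : EuclideanSpace ℝ (Fin d) → ℝ := fun x =>
    ε / 2 * ‖gradient u x‖ ^ 2 + ε⁻¹ * W (u x) - ⟪ξ x, gradPsi W u x⟫ with hedef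
  set F : EuclideanSpace ℝ (Fin d) → ℝ := fun x =>
    (|∑ i, ∑ j, A x i j * (n x - ξ x) i * (n x - ξ x) j|
      + |Matrix.trace (A x)| * (1 - ⟪ξ x, n x⟫)
      + |⟪n x - ξ x, V x⟫| + |g x|) * ‖gradPsi W u x‖ with hFdef
  have hei : Integrable e := hInt.sub hξInt
  -- pointwise facts
  have hq1 : ∀ x, ⟪ξ x, n x⟫ ≤ 1 := by
    intro x
    calc ⟪ξ x, n x⟫ ≤ ‖ξ x‖ * ‖n x‖ := real_inner_le_norm _ _
      _ ≤ 1 := by rw [hn1 x, mul_one]; exact hξ1 x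
  have hAM : ∀ x, ‖gradPsi W u x‖ ≤ ε / 2 * ‖gradient u x‖ ^ 2 + ε⁻¹ * W (u x) := by
    intro x
    have h1 : ‖gradPsi W u x‖ = Real.sqrt (2 * W (u x)) * ‖gradient u x‖ := by
      rw [gradPsi, norm_smul, Real.norm_eq_abs, abs_of_nonneg (Real.sqrt_nonneg _)]
    have h2 : Real.sqrt (2 * W (u x)) ^ 2 = 2 * W (u x) :=
      Real.sq_sqrt (by nlinarith [hW0 (u x)])
    rw [h1]
    have h4 : ε * (Real.sqrt (2 * W (u x)) * ‖gradient u x‖) ≤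
        ε * (ε / 2 * ‖gradient u x‖ ^ 2) + W (u x) := by
      nlinarith [sq_nonneg (ε * ‖gradient u x‖ - Real.sqrt (2 * W (u x)))]
    have h5 : ε⁻¹ * (ε * (Real.sqrt (2 * W (u x)) * ‖gradient u x‖)) ≤
        ε⁻¹ * (ε * (ε / 2 * ‖gradient u x‖ ^ 2) + W (u x)) :=
      mul_le_mul_of_nonneg_left h4 (by positivity)
    calc Real.sqrt (2 * W (u x)) * ‖gradient u x‖
        = ε⁻¹ * (ε * (Real.sqrt (2 * W (u x)) * ‖gradient u x‖)) := by
          rw [← mul_assoc, inv_mul_cancel₀ hε.ne', one_mul]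
      _ ≤ ε⁻¹ * (ε * (ε / 2 * ‖gradient u x‖ ^ 2) + W (u x)) := h5
      _ = ε / 2 * ‖gradient u x‖ ^ 2 + ε⁻¹ * W (u x) := by
          rw [mul_add, ← mul_assoc, inv_mul_cancel₀ hε.ne', one_mul]
  have hqP : ∀ x, ⟪ξ x, n x⟫ * ‖gradPsi W u x‖ = ⟪ξ x, gradPsi W u x⟫ := by
    intro x
    by_cases hG : gradient u x = 0
    · simp [gradPsi, hG]
    · have hGn : ‖gradient u x‖ ≠ 0 := norm_ne_zero_iff.mpr hG
      rw [hngrad x hG, gradPsi, real_inner_smul_right, real_inner_smul_right, norm_smul,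
        Real.norm_eq_abs, abs_of_nonneg (Real.sqrt_nonneg _)]
      field_simp
  have he1 : ∀ x, (1 - ⟪ξ x, n x⟫) * ‖gradPsi W u x‖ ≤ e x := by
    intro x
    have := hqP x
    have := hAM x
    simp only [hedef]
    nlinarith
  have he0 : ∀ x, 0 ≤ e x := by
    intro x
    have h1 := he1 x
    have h2 : 0 ≤ (1 - ⟪ξ x, n x⟫) * ‖gradPsi W u x‖ :=
      mul_nonneg (by linarith [hq1 x]) (norm_nonneg _)
    linarith
  have he2 : ∀ x, min (Metric.infDist x I ^ 2) 1 * ‖gradPsi W u x‖ ≤ e x / κ := by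
    intro x
    rw [le_div_iff₀ hκ0]
    have h1 := mul_le_mul_of_nonneg_right (hκξ x) (norm_nonneg (gradPsi W u x))
    have h2 : ⟪ξ x, gradPsi W u x⟫ ≤ ‖ξ x‖ * ‖gradPsi W u x‖ := real_inner_le_norm _ _
    have h3 := hAM x
    simp only [hedef]
    nlinarith
  -- pointwise bound F ≤ C * e
  have hFC : ∀ x, F x ≤ C * e x := by
    intro x
    set a : EuclideanSpace ℝ (Fin d) := n x - ξ x with ha
    set q : ℝ := ⟪ξ x, n x⟫ with hq
    set m2 : ℝ := min (Metric.infDist x I ^ 2) 1 with hm2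
    set m1 : ℝ := min (Metric.infDist x I) 1 with hm1
    have hm10 : 0 ≤ m1 := le_min Metric.infDist_nonneg zero_le_one
    have hm1sq : m1 ^ 2 = m2 := by
      rcases le_total (Metric.infDist x I) 1 with h | h
      · rw [hm1, hm2, min_eq_left h, min_eq_left (by nlinarith [Metric.infDist_nonneg (x := x) (s := I)])]
      · rw [hm1, hm2, min_eq_right h, min_eq_right (by nlinarith), one_pow]
    have hm20 : 0 ≤ m2 := by rw [← hm1sq]; positivity
    have hq0 : 0 ≤ 1 - q := by linarith [hq1 x]
    have hasum : ∑ i, a i ^ 2 = ‖a‖ ^ 2 := by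
      rw [EuclideanSpace.norm_eq, Real.sq_sqrt (by positivity)]
      simp [Real.norm_eq_abs, sq_abs]
    have hnsq : ‖a‖ ^ 2 ≤ 2 * (1 - q) := by
      have h := norm_sub_sq_real (n x) (ξ x)
      rw [ha, h, hn1 x, real_inner_comm]
      nlinarith [hξ1 x, norm_nonneg (ξ x)]
    have hcs : (∑ i, |a i|) ^ 2 ≤ (d : ℝ) * ‖a‖ ^ 2 := by
      have h := sq_sum_le_card_mul_sum_sq (s := (Finset.univ : Finset (Fin d)))
        (f := fun i => |a i|)
      simp only [Finset.card_univ, Fintype.card_fin, sq_abs] at h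
      calc (∑ i, |a i|) ^ 2 ≤ (d : ℝ) * ∑ i, a i ^ 2 := by exact_mod_cast h
        _ = (d : ℝ) * ‖a‖ ^ 2 := by rw [hasum]
    have hT1 : |∑ i, ∑ j, A x i j * a i * a j| ≤ Λ * (2 * d) * (1 - q) := by
      have h1 : |∑ i, ∑ j, A x i j * a i * a j| ≤ ∑ i, ∑ j, Λ * (|a i| * |a j|) := by
        refine (Finset.abs_sum_le_sum_abs _ _).trans ?_
        refine Finset.sum_le_sum fun i _ => ?_
        refine (Finset.abs_sum_le_sum_abs _ _).trans ?_
        refine Finset.sum_le_sum fun j _ => ?_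
        rw [abs_mul, abs_mul, ← mul_assoc]
        exact mul_le_mul_of_nonneg_right
          (mul_le_mul_of_nonneg_right (hAb x i j) (abs_nonneg _)) (abs_nonneg _)
      have h2 : ∑ i, ∑ j, Λ * (|a i| * |a j|) = Λ * (∑ i, |a i|) ^ 2 := by
        rw [sq, Fintype.sum_mul_sum, Finset.mul_sum]
        exact Finset.sum_congr rfl fun i _ => by rw [Finset.mul_sum]
      have h3 : Λ * (∑ i, |a i|) ^ 2 ≤ Λ * ((d : ℝ) * (2 * (1 - q))) := by
        apply mul_le_mul_of_nonneg_left _ hΛ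
        calc (∑ i, |a i|) ^ 2 ≤ (d : ℝ) * ‖a‖ ^ 2 := hcs
          _ ≤ (d : ℝ) * (2 * (1 - q)) :=
            mul_le_mul_of_nonneg_left hnsq (by positivity)
      calc |∑ i, ∑ j, A x i j * a i * a j| ≤ Λ * (∑ i, |a i|) ^ 2 := h2 ▸ h1
        _ ≤ Λ * ((d : ℝ) * (2 * (1 - q))) := h3
        _ = Λ * (2 * d) * (1 - q) := by ring
    have hT2 : |Matrix.trace (A x)| ≤ Λ * d := by
      rw [Matrix.trace]
      refine (Finset.abs_sum_le_sum_abs _ _).trans ?_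
      calc ∑ i, |Matrix.diag (A x) i| ≤ ∑ _i : Fin d, Λ :=
            Finset.sum_le_sum fun i _ => hAb x i i
        _ = Λ * d := by simp [mul_comm]
    have hT3 : |⟪a, V x⟫| ≤ Λ * (1 - q) + Λ / 2 * m2 := by
      have h1 := abs_real_inner_le_norm a (V x)
      have h2 := hVb x
      have h3 : ‖a‖ * ‖V x‖ ≤ ‖a‖ * (Λ * m1) :=
        mul_le_mul_of_nonneg_left h2 (norm_nonneg a)
      have h4 : 0 ≤ Λ * (‖a‖ - m1) ^ 2 := mul_nonneg hΛ (sq_nonneg _)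
      nlinarith [mul_le_mul_of_nonneg_left hnsq hΛ]
    have hT4 : |g x| ≤ Λ * m2 := hgb x
    -- assemble
    have hPnn : (0:ℝ) ≤ ‖gradPsi W u x‖ := norm_nonneg _
    have key1 : (1 - q) * ‖gradPsi W u x‖ ≤ e x := he1 x
    have key2 : m2 * ‖gradPsi W u x‖ ≤ e x / κ := he2 x
    have key3 : e x ≤ e x / κ := by
      rw [le_div_iff₀ hκ0]
      nlinarith [he0 x]
    have hsum : F x ≤ (Λ * (2 * d) * (1 - q) + Λ * d * (1 - q)
        + (Λ * (1 - q) + Λ / 2 * m2) + Λ * m2) * ‖gradPsi W u x‖ := by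
      apply mul_le_mul_of_nonneg_right _ hPnn
      have h5 : |Matrix.trace (A x)| * (1 - q) ≤ Λ * d * (1 - q) :=
        mul_le_mul_of_nonneg_right hT2 hq0
      linarith
    have hring : (Λ * (2 * d) * (1 - q) + Λ * d * (1 - q)
        + (Λ * (1 - q) + Λ / 2 * m2) + Λ * m2) * ‖gradPsi W u x‖
        = Λ * (3 * d + 1) * ((1 - q) * ‖gradPsi W u x‖)
          + (3 * Λ / 2) * (m2 * ‖gradPsi W u x‖) := by ring
    have hfin : Λ * (3 * d + 1) * ((1 - q) * ‖gradPsi W u x‖)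
          + (3 * Λ / 2) * (m2 * ‖gradPsi W u x‖) ≤ C * e x := by
      have h6 : Λ * (3 * (d:ℝ) + 1) * ((1 - q) * ‖gradPsi W u x‖) ≤
          Λ * (3 * (d:ℝ) + 1) * (e x / κ) := by
        apply mul_le_mul_of_nonneg_left (key1.trans key3) (by positivity)
      have h7 : (3 * Λ / 2) * (m2 * ‖gradPsi W u x‖) ≤ (3 * Λ / 2) * (e x / κ) :=
        mul_le_mul_of_nonneg_left key2 (by positivity)
      have h8 : Λ * (3 * (d:ℝ) + 1) * (e x / κ) + (3 * Λ / 2) * (e x / κ)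
          ≤ C * e x := by
        rw [hC]
        have h9 : 0 ≤ e x / κ := div_nonneg (he0 x) hκ0.le
        have h10 : Λ * (3 * (d:ℝ) + 3) / κ * e x = Λ * (3 * (d:ℝ) + 3) * (e x / κ) := by
          ring
        rw [h10]
        have h11 : 0 ≤ Λ / 2 * (e x / κ) := mul_nonneg (by linarith) h9
        nlinarith
      linarith
    calc F x ≤ _ := hsum
      _ = _ := hring
      _ ≤ C * e x := hfin
  have hF0 : ∀ x, 0 ≤ F x := by
    intro x
    apply mul_nonneg _ (norm_nonneg _)
    have h1 : 0 ≤ |Matrix.trace (A x)| * (1 - ⟪ξ x, n x⟫) :=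
      mul_nonneg (abs_nonneg _) (by linarith [hq1 x])
    positivity
  have hCei : Integrable (fun x => C * e x) := hei.const_mul C
  have hmono : (∫ x, F x) ≤ ∫ x, C * e x :=
    integral_mono_of_nonneg (Filter.Eventually.of_forall hF0) hCei
      (Filter.Eventually.of_forall hFC)
  calc (∫ x, F x) ≤ ∫ x, C * e x := hmono
    _ = C * ∫ x, e x := integral_const_mul C e
    _ = C * relEntropy ε W u ξ := rfl
end
end

section
/- Estimate of the quadratic curvature term: there exists a constant C = C(κ, Λ) < ∞ such that 0 ≤ ∫_{ℝ^d} |H|² (ε/2)|∇u|² + (∇·ξ)² ε^{-1} W(u) + (H·n)(∇·ξ) |∇ψ| dx ≤ C E[u|ξ]; here the nonnegativity follows from the pointwise identity that the integrand equals (1/2)|√ε |∇u| H + ε^{-1/2} (∇·ξ) √(2W(u)) n|². -/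
open MeasureTheory Set
open scoped RealInnerProductSpace

noncomputable section

/-- The `i`-th standard basis vector of `ℝ^d`. -/
def eb {d : ℕ} (i : Fin d) : EuclideanSpace ℝ (Fin d) :=
  EuclideanSpace.single i 1

/-- The divergence `∇·F = ∑ i ∂_i F_i`. -/
def divE {d : ℕ} (F : EuclideanSpace ℝ (Fin d) → EuclideanSpace ℝ (Fin d))
    (x : EuclideanSpace ℝ (Fin d)) : ℝ :=
  ∑ i, ⟪fderiv ℝ F x (eb i), eb i⟫

/-- Elementary AM–GM type bound: `√(2W) |∇u| ≤ ε/2 |∇u|² + ε⁻¹ W`. -/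
theorem amgm_aux (ε Wv ng : ℝ) (hε : 0 < ε) (hW : 0 ≤ Wv) :
    Real.sqrt (2 * Wv) * ng ≤ ε / 2 * ng ^ 2 + ε⁻¹ * Wv := by
  have hr0 : 0 < Real.sqrt ε := Real.sqrt_pos.2 hε
  set r := Real.sqrt ε with hr
  set q := Real.sqrt (2 * Wv) with hq
  have hr2 : r ^ 2 = ε := Real.sq_sqrt hε.le
  have hq2 : q ^ 2 = 2 * Wv := Real.sq_sqrt (by linarith)
  have hWv : Wv = q ^ 2 / 2 := by rw [hq2]; ring
  rw [hWv, ← hr2]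
  have key := sq_nonneg (r * ng - r⁻¹ * q)
  have hrr : r * r⁻¹ = 1 := mul_inv_cancel₀ hr0.ne'
  have h1 : (r ^ 2)⁻¹ * (q ^ 2 / 2) = (r⁻¹ * q) ^ 2 / 2 := by
    field_simp
  rw [h1]
  have h2 : (r * ng) * (r⁻¹ * q) = q * ng := by
    field_simp
  nlinarith [key, h2]

/-- The pointwise algebraic identity behind nonnegativity of the quadratic curvature term. -/
theorem quad_ident {E : Type*} [NormedAddCommGroup E] [InnerProductSpace ℝ E]
    (ε Wv D : ℝ) (hε : 0 < ε) (hW : 0 ≤ Wv)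
    (g Hx nx : E) (hn : ‖nx‖ = 1) :
    ‖Hx‖ ^ 2 * (ε / 2 * ‖g‖ ^ 2) + D ^ 2 * (ε⁻¹ * Wv)
      + ⟪Hx, nx⟫ * D * ‖Real.sqrt (2 * Wv) • g‖
    = 1 / 2 * ‖(Real.sqrt ε * ‖g‖) • Hx
        + ((Real.sqrt ε)⁻¹ * D * Real.sqrt (2 * Wv)) • nx‖ ^ 2 := by
  have hr0 : 0 < Real.sqrt ε := Real.sqrt_pos.2 hε
  set r := Real.sqrt ε with hr
  set q := Real.sqrt (2 * Wv) with hq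
  have hr2 : r ^ 2 = ε := Real.sq_sqrt hε.le
  have hq2 : q ^ 2 = 2 * Wv := Real.sq_sqrt (by linarith)
  have hWv : Wv = q ^ 2 / 2 := by rw [hq2]; ring
  rw [norm_add_sq_real, real_inner_smul_left, real_inner_smul_right,
    norm_smul, norm_smul, norm_smul, hn, hWv, ← hr2]
  simp only [Real.norm_eq_abs, mul_one]
  rw [abs_of_nonneg (by positivity : (0:ℝ) ≤ r * ‖g‖),
    abs_of_nonneg (Real.sqrt_nonneg _ : (0:ℝ) ≤ q)]
  rw [mul_pow, sq_abs]
  field_simp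
  rw [← hq]
  ring

/-- The key pointwise estimate: the quadratic curvature integrand is controlled by the
relative entropy density, with constant `36 Λ² / κ`. -/
theorem key_pointwise_s11 {E : Type*} [NormedAddCommGroup E] [InnerProductSpace ℝ E]
    (κ Λ ε Wv D m : ℝ) (hκ0 : 0 < κ) (hκ1 : κ ≤ 1) (hΛ : 0 ≤ Λ) (hε : 0 < ε) (hW : 0 ≤ Wv)
    (g Hx nx ξx : E) (hn : ‖nx‖ = 1)
    (hng : g ≠ 0 → nx = ‖g‖⁻¹ • g)
    (hξ1 : ‖ξx‖ ≤ 1)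
    (hm0 : 0 ≤ m)
    (hco : κ * m ^ 2 ≤ 1 - ‖ξx‖)
    (hHb : ‖Hx‖ ≤ Λ) (hDb : |D| ≤ Λ)
    (hdiv : |D + ⟪Hx, ξx⟫| ≤ Λ * m)
    (hperp : ‖Hx - ⟪Hx, ξx⟫ • ξx‖ ≤ Λ * m) :
    1 / 2 * ‖(Real.sqrt ε * ‖g‖) • Hx + ((Real.sqrt ε)⁻¹ * D * Real.sqrt (2 * Wv)) • nx‖ ^ 2
      ≤ 36 * Λ ^ 2 / κ * (ε / 2 * ‖g‖ ^ 2 + ε⁻¹ * Wv - ⟪ξx, Real.sqrt (2 * Wv) • g⟫) := by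
  have hr0 : 0 < Real.sqrt ε := Real.sqrt_pos.2 hε
  set r := Real.sqrt ε with hr
  set q := Real.sqrt (2 * Wv) with hq
  have hq0 : 0 ≤ q := Real.sqrt_nonneg _
  have hr2 : r ^ 2 = ε := Real.sq_sqrt hε.le
  have hq2 : q ^ 2 = 2 * Wv := Real.sq_sqrt (by linarith)
  set a := r * ‖g‖ with ha
  set c := r⁻¹ * q with hc
  set t := (⟪Hx, ξx⟫ : ℝ) with ht
  set ip := (⟪ξx, q • g⟫ : ℝ) with hip
  set e := ε / 2 * ‖g‖ ^ 2 + ε⁻¹ * Wv - ip with he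
  have ha0 : 0 ≤ a := by rw [ha]; positivity
  have hc0 : 0 ≤ c := by rw [hc]; positivity
  have hP : ε / 2 * ‖g‖ ^ 2 + ε⁻¹ * Wv = a ^ 2 / 2 + c ^ 2 / 2 := by
    have hWv : Wv = q ^ 2 / 2 := by rw [hq2]; ring
    rw [hWv, ← hr2, ha, hc]
    field_simp
  have hipq : ip = q * ⟪ξx, g⟫ := by rw [hip, real_inner_smul_right]
  have hqg : ‖q • g‖ = a * c := by
    rw [norm_smul, Real.norm_eq_abs, abs_of_nonneg hq0, ha, hc]
    field_simp
  clear_value r q a c t ip e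
  have hipb : ip ≤ ‖ξx‖ * (a * c) := by
    have h1 : ip ≤ ‖ξx‖ * ‖q • g‖ := by rw [hip]; exact real_inner_le_norm _ _
    rw [hqg] at h1; exact h1
  have hiple : ip ≤ a * c := by
    calc ip ≤ ‖ξx‖ * (a * c) := hipb
    _ ≤ 1 * (a * c) := mul_le_mul_of_nonneg_right hξ1 (mul_nonneg ha0 hc0)
    _ = a * c := one_mul _
  have hacP : a * c ≤ a ^ 2 / 2 + c ^ 2 / 2 := by linarith only [sq_nonneg (a - c)]
  have heP : e = a ^ 2 / 2 + c ^ 2 / 2 - ip := by rw [he, hP]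
  have he0 : 0 ≤ e := by linarith only [heP, hiple, hacP]
  have hF1 : (a - c) ^ 2 ≤ 2 * e := by linarith only [hiple, heP]
  have hcoV : κ * m ^ 2 * (a ^ 2 + c ^ 2) ≤ 2 * e := by
    have h2 : (κ * m ^ 2) * (a ^ 2 + c ^ 2) ≤ (1 - ‖ξx‖) * (a ^ 2 + c ^ 2) :=
      mul_le_mul_of_nonneg_right hco (by positivity)
    have h3 : ‖ξx‖ * (2 * (a * c)) ≤ ‖ξx‖ * (a ^ 2 + c ^ 2) :=
      mul_le_mul_of_nonneg_left (by linarith only [sq_nonneg (a - c)]) (norm_nonneg _)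
    linarith only [h2, h3, hipb, heP]
  have hA : κ * (a ^ 2 * m ^ 2) ≤ 2 * e := by
    linarith only [hcoV, mul_nonneg (mul_nonneg hκ0.le (sq_nonneg m)) (sq_nonneg c)]
  have hC : κ * (c ^ 2 * m ^ 2) ≤ 2 * e := by
    linarith only [hcoV, mul_nonneg (mul_nonneg hκ0.le (sq_nonneg m)) (sq_nonneg a)]
  have hnsub : ‖nx - ξx‖ ^ 2 ≤ 2 - 2 * ⟪ξx, nx⟫ := by
    rw [norm_sub_sq_real, hn]
    have h1 : ‖ξx‖ * ‖ξx‖ ≤ 1 * 1 := mul_le_mul hξ1 hξ1 (norm_nonneg _) zero_le_one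
    have hcomm : (⟪nx, ξx⟫ : ℝ) = ⟪ξx, nx⟫ := real_inner_comm _ _
    linarith only [h1, hcomm, (by ring : ‖ξx‖ ^ 2 = ‖ξx‖ * ‖ξx‖)]
  have hF3 : a * c * ‖nx - ξx‖ ^ 2 ≤ 2 * e := by
    by_cases hg0 : g = 0
    · have haz : a = 0 := by rw [ha, hg0, norm_zero, mul_zero]
      rw [haz]; linarith only [he0]
    · have hnx := hng hg0
      have hgn : (0:ℝ) < ‖g‖ := norm_pos_iff.2 hg0
      have hipn : a * c * ⟪ξx, nx⟫ = ip := by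
        rw [hnx, real_inner_smul_right, hipq, ha, hc]
        field_simp
      have h1 : a * c * ‖nx - ξx‖ ^ 2 ≤ a * c * (2 - 2 * ⟪ξx, nx⟫) :=
        mul_le_mul_of_nonneg_left hnsub (mul_nonneg ha0 hc0)
      linarith only [h1, hipn, heP, hacP]
  have hnle : ‖nx - ξx‖ ≤ 2 := by
    have h1 : ‖nx - ξx‖ ≤ ‖nx‖ + ‖ξx‖ := norm_sub_le _ _
    rw [hn] at h1; linarith only [h1, hξ1]
  have hnsq4 : ‖nx - ξx‖ ^ 2 ≤ 4 := by
    have h2 := mul_le_mul hnle hnle (norm_nonneg _) (by norm_num : (0:ℝ) ≤ 2)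
    linarith only [h2]
  have hF4 : c ^ 2 * ‖nx - ξx‖ ^ 2 ≤ 12 * e := by
    have h1 : c ^ 2 ≤ 2 * (a * c) + (a - c) ^ 2 := by linarith only [sq_nonneg a]
    have h2 : c ^ 2 * ‖nx - ξx‖ ^ 2 ≤ (2 * (a * c) + (a - c) ^ 2) * ‖nx - ξx‖ ^ 2 :=
      mul_le_mul_of_nonneg_right h1 (sq_nonneg _)
    have h3 : (a - c) ^ 2 * ‖nx - ξx‖ ^ 2 ≤ 2 * e * 4 :=
      mul_le_mul hF1 hnsq4 (sq_nonneg _) (by linarith only [he0])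
    linarith only [h2, h3, hF3]
  have hcoef : r⁻¹ * D * q = D * c := by rw [hc]; ring
  have hv : a • Hx + (D * c) • nx
      = a • (Hx - t • ξx) + (t * (a - c)) • ξx + ((D + t) * c) • ξx + (D * c) • (nx - ξx) := by
    module
  set t1 := a * (Λ * m) with ht1
  set t2 := Λ * |a - c| with ht2
  set t3 := Λ * m * c with ht3
  set t4 := Λ * (c * ‖nx - ξx‖) with ht4
  have hb1 : ‖a • (Hx - t • ξx)‖ ≤ t1 := by
    rw [norm_smul, Real.norm_eq_abs, abs_of_nonneg ha0, ht1]
    exact mul_le_mul_of_nonneg_left hperp ha0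
  have htb : |t| ≤ Λ := by
    calc |t| ≤ ‖Hx‖ * ‖ξx‖ := by rw [ht]; exact abs_real_inner_le_norm _ _
    _ ≤ Λ * 1 := mul_le_mul hHb hξ1 (norm_nonneg _) hΛ
    _ = Λ := mul_one _
  have hb2 : ‖(t * (a - c)) • ξx‖ ≤ t2 := by
    rw [norm_smul, Real.norm_eq_abs, abs_mul, ht2]
    calc |t| * |a - c| * ‖ξx‖ ≤ |t| * |a - c| * 1 :=
          mul_le_mul_of_nonneg_left hξ1 (mul_nonneg (abs_nonneg _) (abs_nonneg _))
    _ = |t| * |a - c| := mul_one _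
    _ ≤ Λ * |a - c| := mul_le_mul_of_nonneg_right htb (abs_nonneg _)
  have hb3 : ‖((D + t) * c) • ξx‖ ≤ t3 := by
    rw [norm_smul, Real.norm_eq_abs, abs_mul, abs_of_nonneg hc0, ht3]
    calc |D + t| * c * ‖ξx‖ ≤ |D + t| * c * 1 :=
          mul_le_mul_of_nonneg_left hξ1 (mul_nonneg (abs_nonneg _) hc0)
    _ = |D + t| * c := mul_one _
    _ ≤ Λ * m * c := mul_le_mul_of_nonneg_right hdiv hc0
  have hb4 : ‖(D * c) • (nx - ξx)‖ ≤ t4 := by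
    rw [norm_smul, Real.norm_eq_abs, abs_mul, abs_of_nonneg hc0, ht4]
    have h5 : |D| * c ≤ Λ * c := mul_le_mul_of_nonneg_right hDb hc0
    calc |D| * c * ‖nx - ξx‖ ≤ Λ * c * ‖nx - ξx‖ :=
          mul_le_mul_of_nonneg_right h5 (norm_nonneg _)
    _ = Λ * (c * ‖nx - ξx‖) := by ring
  clear_value t1 t2 t3 t4
  have hnormle : ‖a • Hx + (D * c) • nx‖ ≤ t1 + t2 + t3 + t4 := by
    rw [hv]
    calc ‖a • (Hx - t • ξx) + (t * (a - c)) • ξx + ((D + t) * c) • ξx + (D * c) • (nx - ξx)‖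
        ≤ ‖a • (Hx - t • ξx) + (t * (a - c)) • ξx + ((D + t) * c) • ξx‖ + ‖(D * c) • (nx - ξx)‖ :=
          norm_add_le _ _
    _ ≤ ‖a • (Hx - t • ξx) + (t * (a - c)) • ξx‖ + ‖((D + t) * c) • ξx‖ + ‖(D * c) • (nx - ξx)‖ := by
          gcongr; exact norm_add_le _ _
    _ ≤ ‖a • (Hx - t • ξx)‖ + ‖(t * (a - c)) • ξx‖ + ‖((D + t) * c) • ξx‖ + ‖(D * c) • (nx - ξx)‖ := by
          gcongr; exact norm_add_le _ _
    _ ≤ t1 + t2 + t3 + t4 := by gcongr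
  have hsq : ‖a • Hx + (D * c) • nx‖ ^ 2 ≤ (t1 + t2 + t3 + t4) ^ 2 :=
    pow_le_pow_left₀ (norm_nonneg _) hnormle 2
  have h1 : κ * t1 ^ 2 ≤ 2 * Λ ^ 2 * e := by
    rw [ht1]
    linarith only [mul_le_mul_of_nonneg_left hA (sq_nonneg Λ)]
  have h2 : κ * t2 ^ 2 ≤ 2 * Λ ^ 2 * e := by
    have hs : t2 ^ 2 = Λ ^ 2 * (a - c) ^ 2 := by rw [ht2, mul_pow, sq_abs]
    rw [hs]
    linarith only [mul_le_mul_of_nonneg_left hF1 (sq_nonneg Λ),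
      mul_nonneg (mul_nonneg (sub_nonneg.2 hκ1) (sq_nonneg Λ)) (sq_nonneg (a - c))]
  have h3 : κ * t3 ^ 2 ≤ 2 * Λ ^ 2 * e := by
    rw [ht3]
    linarith only [mul_le_mul_of_nonneg_left hC (sq_nonneg Λ)]
  have h4 : κ * t4 ^ 2 ≤ 12 * Λ ^ 2 * e := by
    have hs : t4 ^ 2 = Λ ^ 2 * (c ^ 2 * ‖nx - ξx‖ ^ 2) := by rw [ht4]; ring
    rw [hs]
    linarith only [mul_le_mul_of_nonneg_left hF4 (sq_nonneg Λ),
      mul_nonneg (mul_nonneg (sub_nonneg.2 hκ1) (sq_nonneg Λ))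
        (mul_nonneg (sq_nonneg c) (sq_nonneg ‖nx - ξx‖))]
  have hquad : (t1 + t2 + t3 + t4) ^ 2 ≤ 4 * (t1 ^ 2 + t2 ^ 2 + t3 ^ 2 + t4 ^ 2) := by
    linarith only [sq_nonneg (t1 - t2), sq_nonneg (t1 - t3), sq_nonneg (t1 - t4),
      sq_nonneg (t2 - t3), sq_nonneg (t2 - t4), sq_nonneg (t3 - t4)]
  have hT : κ * ((t1 + t2 + t3 + t4) ^ 2) ≤ 72 * Λ ^ 2 * e := by
    linarith only [mul_le_mul_of_nonneg_left hquad hκ0.le, h1, h2, h3, h4]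
  have hvsq : κ * ‖a • Hx + (D * c) • nx‖ ^ 2 ≤ 72 * Λ ^ 2 * e := by
    linarith only [mul_le_mul_of_nonneg_left hsq hκ0.le, hT]
  have hfin : ‖a • Hx + (D * c) • nx‖ ^ 2 ≤ 72 * Λ ^ 2 * e / κ := by
    rw [le_div_iff₀ hκ0]; linarith only [hvsq]
  calc 1 / 2 * ‖a • Hx + (r⁻¹ * D * q) • nx‖ ^ 2
      = 1 / 2 * ‖a • Hx + (D * c) • nx‖ ^ 2 := by rw [hcoef]
  _ ≤ 1 / 2 * (72 * Λ ^ 2 * e / κ) := by linarith only [hfin]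
  _ = 36 * Λ ^ 2 / κ * e := by ring

/-- Estimate of the quadratic curvature term, together with the pointwise identity showing
nonnegativity of the integrand. The constant `C` depends only on `κ` and `Λ`. -/
theorem quadratic_curvature_term_estimate
    (κ Λ : ℝ) (hκ : κ ∈ Ioc (0:ℝ) 1) (hΛ : 0 ≤ Λ) :
    ∃ C : ℝ, ∀ d : ℕ, 1 ≤ d → ∀ ε : ℝ, 0 < ε →
    ∀ W : ℝ → ℝ, Continuous W → (∀ s, 0 ≤ W s) →
    ∀ u : EuclideanSpace ℝ (Fin d) → ℝ, ContDiff ℝ 1 u →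
      Integrable (fun x => ε / 2 * ‖gradient u x‖ ^ 2 + ε⁻¹ * W (u x)) →
    ∀ n : EuclideanSpace ℝ (Fin d) → EuclideanSpace ℝ (Fin d),
      (∀ x, ‖n x‖ = 1) →
      (∀ x, gradient u x ≠ 0 → n x = ‖gradient u x‖⁻¹ • gradient u x) →
    ∀ ξ : EuclideanSpace ℝ (Fin d) → EuclideanSpace ℝ (Fin d),
      ContDiff ℝ 1 ξ → (∀ x, ‖ξ x‖ ≤ 1) →
    ∀ I : Set (EuclideanSpace ℝ (Fin d)), I.Nonempty → IsClosed I →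
      (∀ x, κ * min (Metric.infDist x I ^ 2) 1 ≤ 1 - ‖ξ x‖) →
    ∀ H : EuclideanSpace ℝ (Fin d) → EuclideanSpace ℝ (Fin d), Measurable H →
      (∀ x, ‖H x‖ ≤ Λ) → (∀ x, |divE ξ x| ≤ Λ) →
      (∀ x, |divE ξ x + ⟪H x, ξ x⟫| ≤ Λ * min (Metric.infDist x I) 1) →
      (∀ x, ‖H x - ⟪H x, ξ x⟫ • ξ x‖ ≤ Λ * min (Metric.infDist x I) 1) →
    (∀ x, ‖H x‖ ^ 2 * (ε / 2 * ‖gradient u x‖ ^ 2) + (divE ξ x) ^ 2 * (ε⁻¹ * W (u x))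
          + ⟪H x, n x⟫ * divE ξ x * ‖gradPsi W u x‖
        = 1 / 2 * ‖(Real.sqrt ε * ‖gradient u x‖) • H x
            + ((Real.sqrt ε)⁻¹ * divE ξ x * Real.sqrt (2 * W (u x))) • n x‖ ^ 2)
    ∧ 0 ≤ (∫ x, ‖H x‖ ^ 2 * (ε / 2 * ‖gradient u x‖ ^ 2) + (divE ξ x) ^ 2 * (ε⁻¹ * W (u x))
          + ⟪H x, n x⟫ * divE ξ x * ‖gradPsi W u x‖)
    ∧ (∫ x, ‖H x‖ ^ 2 * (ε / 2 * ‖gradient u x‖ ^ 2) + (divE ξ x) ^ 2 * (ε⁻¹ * W (u x))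
          + ⟪H x, n x⟫ * divE ξ x * ‖gradPsi W u x‖)
        ≤ C * relEntropy ε W u ξ := by
  obtain ⟨hκ0, hκ1⟩ := hκ
  refine ⟨36 * Λ ^ 2 / κ, ?_⟩
  intro d hd ε hε W hWc hW0 u hu hEint n hn1 hng ξ hξc hξ1 I hIne hIcl hco H hHm hHb hDb hdiv hperp
  have hident : ∀ x, ‖H x‖ ^ 2 * (ε / 2 * ‖gradient u x‖ ^ 2) + (divE ξ x) ^ 2 * (ε⁻¹ * W (u x))
          + ⟪H x, n x⟫ * divE ξ x * ‖gradPsi W u x‖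
        = 1 / 2 * ‖(Real.sqrt ε * ‖gradient u x‖) • H x
            + ((Real.sqrt ε)⁻¹ * divE ξ x * Real.sqrt (2 * W (u x))) • n x‖ ^ 2 := by
    intro x
    simp only [gradPsi]
    exact quad_ident ε (W (u x)) (divE ξ x) hε (hW0 _) (gradient u x) (H x) (n x) (hn1 x)
  refine ⟨hident, ?_, ?_⟩
  · exact integral_nonneg fun x => by rw [hident x]; positivity
  · -- pointwise domination by the relative entropy density
    have hmins : ∀ x : EuclideanSpace ℝ (Fin d),
        (min (Metric.infDist x I) 1) ^ 2 = min (Metric.infDist x I ^ 2) 1 := by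
      intro x
      have h0 : 0 ≤ Metric.infDist x I := Metric.infDist_nonneg
      rcases le_total (Metric.infDist x I) 1 with h | h
      · rw [min_eq_left h, min_eq_left]
        have := mul_le_mul h h h0 zero_le_one
        nlinarith [this]
      · rw [min_eq_right h, min_eq_right, one_pow]
        have := mul_le_mul h h zero_le_one (le_trans zero_le_one h)
        nlinarith [this]
    have hkey : ∀ x, ‖H x‖ ^ 2 * (ε / 2 * ‖gradient u x‖ ^ 2) + (divE ξ x) ^ 2 * (ε⁻¹ * W (u x))
          + ⟪H x, n x⟫ * divE ξ x * ‖gradPsi W u x‖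
        ≤ 36 * Λ ^ 2 / κ *
            (ε / 2 * ‖gradient u x‖ ^ 2 + ε⁻¹ * W (u x) - ⟪ξ x, gradPsi W u x⟫) := by
      intro x
      rw [hident x]
      simp only [gradPsi]
      exact key_pointwise_s11 κ Λ ε (W (u x)) (divE ξ x) (min (Metric.infDist x I) 1)
        hκ0 hκ1 hΛ hε (hW0 _) (gradient u x) (H x) (n x) (ξ x) (hn1 x) (hng x) (hξ1 x)
        (le_min Metric.infDist_nonneg zero_le_one)
        (by rw [hmins x]; exact hco x) (hHb x) (hDb x) (hdiv x) (hperp x)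
    -- integrability of the relative entropy density
    have hgradc : Continuous (gradient u) := by
      have h1 : Continuous (fderiv ℝ u) := hu.continuous_fderiv one_ne_zero
      exact (InnerProductSpace.toDual ℝ (EuclideanSpace ℝ (Fin d))).symm.continuous.comp h1
    have hgPc : Continuous (gradPsi W u) := by
      have h1 : Continuous fun x => Real.sqrt (2 * W (u x)) :=
        Real.continuous_sqrt.comp ((continuous_const.mul hWc).comp hu.continuous)
      exact h1.smul hgradc
    have hipc : Continuous fun x => (⟪ξ x, gradPsi W u x⟫ : ℝ) :=
      hξc.continuous.inner hgPc
    have hipint : Integrable fun x => (⟪ξ x, gradPsi W u x⟫ : ℝ) := by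
      refine hEint.mono hipc.aestronglyMeasurable (ae_of_all _ fun x => ?_)
      rw [Real.norm_eq_abs, Real.norm_eq_abs]
      have hb : |(⟪ξ x, gradPsi W u x⟫ : ℝ)| ≤ ‖ξ x‖ * ‖gradPsi W u x‖ :=
        abs_real_inner_le_norm _ _
      have h2 : ‖gradPsi W u x‖ = Real.sqrt (2 * W (u x)) * ‖gradient u x‖ := by
        simp only [gradPsi, norm_smul, Real.norm_eq_abs, abs_of_nonneg (Real.sqrt_nonneg _)]
      have h3 : Real.sqrt (2 * W (u x)) * ‖gradient u x‖
          ≤ ε / 2 * ‖gradient u x‖ ^ 2 + ε⁻¹ * W (u x) :=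
        amgm_aux ε (W (u x)) ‖gradient u x‖ hε (hW0 _)
      have h4 : 0 ≤ ε / 2 * ‖gradient u x‖ ^ 2 + ε⁻¹ * W (u x) :=
        add_nonneg (by positivity) (mul_nonneg (inv_nonneg.2 hε.le) (hW0 _))
      rw [abs_of_nonneg h4]
      have h5 : ‖ξ x‖ * ‖gradPsi W u x‖ ≤ 1 * ‖gradPsi W u x‖ :=
        mul_le_mul_of_nonneg_right (hξ1 x) (norm_nonneg _)
      calc |(⟪ξ x, gradPsi W u x⟫ : ℝ)| ≤ ‖ξ x‖ * ‖gradPsi W u x‖ := hb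
      _ ≤ 1 * ‖gradPsi W u x‖ := h5
      _ = Real.sqrt (2 * W (u x)) * ‖gradient u x‖ := by rw [one_mul, h2]
      _ ≤ ε / 2 * ‖gradient u x‖ ^ 2 + ε⁻¹ * W (u x) := h3
    have hefint : Integrable fun x =>
        ε / 2 * ‖gradient u x‖ ^ 2 + ε⁻¹ * W (u x) - ⟪ξ x, gradPsi W u x⟫ :=
      hEint.sub hipint
    calc (∫ x, ‖H x‖ ^ 2 * (ε / 2 * ‖gradient u x‖ ^ 2) + (divE ξ x) ^ 2 * (ε⁻¹ * W (u x))
          + ⟪H x, n x⟫ * divE ξ x * ‖gradPsi W u x‖)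
        ≤ ∫ x, 36 * Λ ^ 2 / κ *
            (ε / 2 * ‖gradient u x‖ ^ 2 + ε⁻¹ * W (u x) - ⟪ξ x, gradPsi W u x⟫) := by
          refine integral_mono_of_nonneg (ae_of_all _ fun x => ?_)
            (hefint.const_mul _) (ae_of_all _ hkey)
          simp only [Pi.zero_apply]
          rw [hident x]; positivity
    _ = 36 * Λ ^ 2 / κ * relEntropy ε W u ξ := by
          rw [integral_const_mul, relEntropy]
end
end

section
/- Estimate of the term involving the Hessian of the velocity field tested with the diffuse normal: there exists a constant C = C(κ, Λ, δ) < ∞ such that ∫_{ℝ^d} |∇H : (n ⊗ n)| · |ε|∇u|² − |∇ψ|| dx ≤ C E[u|ξ]. -/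
open MeasureTheory Set
open scoped RealInnerProductSpace

noncomputable section

lemma key1 (b c : ℝ) : 2*b*|b-c| ≤ 6*(b-c)^2 + 2*(b*c) := by
  rcases le_total c b with h | h
  · rw [abs_of_nonneg (sub_nonneg.2 h)]; nlinarith [sq_nonneg (b-c), sq_nonneg c]
  · rw [abs_of_nonpos (sub_nonpos.2 h)]; nlinarith [sq_nonneg (b-c), sq_nonneg b]

lemma key_far (b c t κ' : ℝ) (hb : 0 ≤ b) (hc : 0 ≤ c) (hκ : 0 < κ') (ht : κ' ≤ t) :
    2*b*|b-c| ≤ (6 + 2/κ') * ((b-c)^2 + 2*(b*c)*t) := by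
  have h1 := key1 b c
  have hbc : 0 ≤ b*c := mul_nonneg hb hc
  have ht0 : 0 ≤ t := hκ.le.trans ht
  have h2 : 2*(b*c) ≤ (2/κ') * (2*(b*c)*t) := by
    rw [div_mul_eq_mul_div, le_div_iff₀ hκ]
    nlinarith [mul_nonneg hbc (sub_nonneg.2 ht)]
  have h3 : 0 ≤ (2/κ') * (b-c)^2 := by positivity
  have h4 : 0 ≤ 6 * (2*(b*c)*t) := by positivity
  nlinarith

lemma key_near (b c t r : ℝ) (hb : 0 ≤ b) (hc : 0 ≤ c) (ht : 0 ≤ t)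
    (hr : 0 ≤ r) (hr2 : r ≤ 2) (hrt : r^2 ≤ 2*t) :
    r * (2*b*|b-c|) ≤ 8 * ((b-c)^2 + 2*(b*c)*t) := by
  rcases le_or_gt b (2*c) with h | h
  · have h1 : 0 ≤ (b*r - |b-c|)^2 := sq_nonneg _
    have h2 : |b-c|^2 = (b-c)^2 := sq_abs _
    have h3 : b^2 * r^2 ≤ b^2 * (2*t) := by nlinarith [sq_nonneg b]
    have h4 : b^2 * (2*t) ≤ (2*c*b) * (2*t) := by
      nlinarith [mul_nonneg (mul_nonneg (sub_nonneg.2 h) hb) ht]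
    have h5 : 0 ≤ b*c*t := by positivity
    nlinarith
  · have hbc : |b-c| = b - c := abs_of_nonneg (by nlinarith)
    rw [hbc]
    have h1 : 0 ≤ (2 - r) * (b * (b-c)) := by
      apply mul_nonneg (by linarith); nlinarith
    have h2 : 0 ≤ (b - 2*c) * (b-c) := by nlinarith
    have h5 : 0 ≤ b*c*t := by positivity
    nlinarith

set_option maxHeartbeats 2000000 in
/-- Estimate of the term involving the Hessian of the velocity field tested with the diffuse
normal. The constant `C` depends only on `κ`, `Λ` and `δ`. -/
theorem velocity_hessian_term_estimate
    (κ Λ δ : ℝ) (hκ : κ ∈ Ioc (0:ℝ) 1) (hΛ : 0 ≤ Λ) (hδ : 0 < δ) :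
    ∃ C : ℝ, ∀ d : ℕ, 1 ≤ d → ∀ ε : ℝ, 0 < ε →
    ∀ W : ℝ → ℝ, Continuous W → (∀ s, 0 ≤ W s) →
    ∀ u : EuclideanSpace ℝ (Fin d) → ℝ, ContDiff ℝ 1 u →
      Integrable (fun x => ε / 2 * ‖gradient u x‖ ^ 2 + ε⁻¹ * W (u x)) →
    ∀ n : EuclideanSpace ℝ (Fin d) → EuclideanSpace ℝ (Fin d),
      (∀ x, ‖n x‖ = 1) →
      (∀ x, gradient u x ≠ 0 → n x = ‖gradient u x‖⁻¹ • gradient u x) →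
    ∀ ξ : EuclideanSpace ℝ (Fin d) → EuclideanSpace ℝ (Fin d),
      Measurable ξ → (∀ x, ‖ξ x‖ ≤ 1) →
      Integrable (fun x => ⟪ξ x, gradPsi W u x⟫) →
    ∀ I : Set (EuclideanSpace ℝ (Fin d)), I.Nonempty → IsClosed I →
      (∀ x, κ * min (Metric.infDist x I ^ 2) 1 ≤ 1 - ‖ξ x‖) →
    ∀ H : EuclideanSpace ℝ (Fin d) → EuclideanSpace ℝ (Fin d), ContDiff ℝ 1 H →
      (∀ x, ‖fderiv ℝ H x‖ ≤ Λ) →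
      (∀ x, Metric.infDist x I ≤ δ → fderiv ℝ H x (ξ x) = 0) →
    (∫ x, |⟪fderiv ℝ H x (n x), n x⟫|
        * |ε * ‖gradient u x‖ ^ 2 - ‖gradPsi W u x‖|)
      ≤ C * relEntropy ε W u ξ := by
  obtain ⟨hκ0, hκ1⟩ := hκ
  have hκ'pos : 0 < κ * min (δ^2) 1 := by
    apply mul_pos hκ0 (lt_min (by positivity) one_pos)
  set κ' := κ * min (δ^2) 1 with hκ'def
  refine ⟨Λ * (8 + 2 / κ'), ?_⟩
  intro d hd ε hε W hWc hW0 u hu hEint n hn1 hn2 ξ hξm hξ1 hξint I hIne hIcl hξκ H hH hHΛ hHξ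
  set C := Λ * (8 + 2 / κ') with hCdef
  have hCnn : 0 ≤ C := by positivity
  -- basic continuity facts
  have hgc : Continuous (gradient u) := by
    have h1 : Continuous (fderiv ℝ u) := hu.continuous_fderiv one_ne_zero
    exact ((InnerProductSpace.toDual ℝ _).symm.continuous.comp h1 :)
  have hfHc : Continuous (fderiv ℝ H) := hH.continuous_fderiv one_ne_zero
  have hψc : Continuous (gradPsi W u) :=
    (Real.continuous_sqrt.comp (continuous_const.mul (hWc.comp hu.continuous))).smul hgc
  have hnormPsi : ∀ x, ‖gradPsi W u x‖ = Real.sqrt (2 * W (u x)) * ‖gradient u x‖ := by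
    intro x
    rw [gradPsi, norm_smul, Real.norm_eq_abs, abs_of_nonneg (Real.sqrt_nonneg _)]
  have hsq : ∀ w : ℝ, 0 ≤ w →
      2 * (Real.sqrt (ε/2) * Real.sqrt (w/ε)) = Real.sqrt (2*w) := by
    intro w hw
    rw [← Real.sqrt_mul (by positivity : (0:ℝ) ≤ ε/2)]
    have h1 : ε/2 * (w/ε) = w/2 := by field_simp
    rw [h1]
    calc 2 * Real.sqrt (w/2) = Real.sqrt ((2:ℝ)^2) * Real.sqrt (w/2) := by
          rw [Real.sqrt_sq (by norm_num : (0:ℝ) ≤ 2)]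
    _ = Real.sqrt ((2:ℝ)^2 * (w/2)) := (Real.sqrt_mul (by norm_num) _).symm
    _ = Real.sqrt (2*w) := by congr 1; ring
  set N : EuclideanSpace ℝ (Fin d) → EuclideanSpace ℝ (Fin d) :=
    fun x => ‖gradient u x‖⁻¹ • gradient u x with hNdef
  set F : EuclideanSpace ℝ (Fin d) → ℝ :=
    fun x => |⟪fderiv ℝ H x (N x), N x⟫| * |ε * ‖gradient u x‖ ^ 2 - ‖gradPsi W u x‖|
    with hFdef
  -- the pointwise estimate
  have hpt : ∀ x, F x ≤ C * (ε / 2 * ‖gradient u x‖ ^ 2 + ε⁻¹ * W (u x)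
      - ⟪ξ x, gradPsi W u x⟫) := by
    intro x
    by_cases hg : gradient u x = 0
    · have h2 : |ε * ‖gradient u x‖ ^ 2 - ‖gradPsi W u x‖| = 0 := by
        rw [hnormPsi x, hg]; simp
      have hF0 : F x = 0 := by rw [hFdef]; dsimp only; rw [h2, mul_zero]
      rw [hF0]
      have : ⟪ξ x, gradPsi W u x⟫ = 0 := by rw [gradPsi, hg, smul_zero, inner_zero_right]
      rw [this]
      have hnn : (0:ℝ) ≤ ε / 2 * ‖gradient u x‖ ^ 2 + ε⁻¹ * W (u x) := by
        have := hW0 (u x); positivity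
      rw [sub_zero]
      exact mul_nonneg hCnn hnn
    · have ha : 0 < ‖gradient u x‖ := norm_pos_iff.2 hg
      set a := ‖gradient u x‖ with hadef
      set w := W (u x) with hwdef
      have hw : 0 ≤ w := hW0 (u x)
      have hN1 : ‖N x‖ = 1 := by
        rw [hNdef]; dsimp only
        rw [norm_smul, norm_inv, norm_norm, inv_mul_cancel₀ ha.ne']
      set b := Real.sqrt (ε/2) * a with hbdef
      set c := Real.sqrt (w/ε) with hcdef
      have hb : 0 ≤ b := mul_nonneg (Real.sqrt_nonneg _) ha.le
      have hc : 0 ≤ c := Real.sqrt_nonneg _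
      have hb2 : ε / 2 * a^2 = b^2 := by
        rw [hbdef, mul_pow, Real.sq_sqrt (by positivity : (0:ℝ) ≤ ε/2)]
      have hc2 : ε⁻¹ * w = c^2 := by
        rw [hcdef, Real.sq_sqrt (by positivity : (0:ℝ) ≤ w/ε)]
        rw [div_eq_mul_inv, mul_comm]
      have h2bc : Real.sqrt (2*w) * a = 2*(b*c) := by
        rw [← hsq w hw, hbdef, hcdef]; ring
      have hsa : ‖gradPsi W u x‖ = 2*(b*c) := by rw [hnormPsi x, ← hadef, ← hwdef, h2bc]
      have hsecond : |ε * a^2 - ‖gradPsi W u x‖| = 2*b*|b-c| := by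
        rw [hsa, show ε * a^2 = 2*b^2 by rw [← hb2]; ring,
          show 2*b^2 - 2*(b*c) = (2*b)*(b-c) by ring, abs_mul,
          abs_of_nonneg (by positivity : (0:ℝ) ≤ 2*b)]
      set p := ⟪ξ x, N x⟫ with hpdef
      have hgN : gradient u x = a • N x := by
        rw [hNdef]; dsimp only
        rw [smul_smul, ← hadef, mul_inv_cancel₀ ha.ne', one_smul]
      have hip : ⟪ξ x, gradPsi W u x⟫ = 2*(b*c) * p := by
        rw [gradPsi, real_inner_smul_right, hgN, real_inner_smul_right, ← hwdef,
          ← mul_assoc, h2bc]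
      have hpξ : p ≤ ‖ξ x‖ := by
        calc p ≤ ‖ξ x‖ * ‖N x‖ := real_inner_le_norm _ _
        _ = ‖ξ x‖ := by rw [hN1, mul_one]
      have hp1 : p ≤ 1 := hpξ.trans (hξ1 x)
      set t := 1 - p with htdef
      have ht0 : 0 ≤ t := by rw [htdef]; linarith
      have hD : ε / 2 * a ^ 2 + ε⁻¹ * w - ⟪ξ x, gradPsi W u x⟫
          = (b-c)^2 + 2*(b*c)*t := by rw [hip, hb2, hc2, htdef]; ring
      have hX : (0:ℝ) ≤ (b-c)^2 + 2*(b*c)*t := by positivity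
      rw [hFdef]; dsimp only
      rw [← hadef, hsecond, hD]
      rcases le_or_gt (Metric.infDist x I) δ with hdist | hdist
      · -- near the interface
        have hAx : fderiv ℝ H x (N x) = fderiv ℝ H x (N x - ξ x) := by
          rw [map_sub, hHξ x hdist, sub_zero]
        set r := ‖N x - ξ x‖ with hrdef
        have hfirst : |⟪fderiv ℝ H x (N x), N x⟫| ≤ Λ * r := by
          rw [hAx]
          calc |⟪fderiv ℝ H x (N x - ξ x), N x⟫|
              ≤ ‖fderiv ℝ H x (N x - ξ x)‖ * ‖N x‖ := abs_real_inner_le_norm _ _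
          _ = ‖fderiv ℝ H x (N x - ξ x)‖ := by rw [hN1, mul_one]
          _ ≤ ‖fderiv ℝ H x‖ * r := (fderiv ℝ H x).le_opNorm _
          _ ≤ Λ * r := mul_le_mul_of_nonneg_right (hHΛ x) (norm_nonneg _)
        have hr0 : 0 ≤ r := norm_nonneg _
        have hr2 : r ≤ 2 := by
          calc r ≤ ‖N x‖ + ‖ξ x‖ := norm_sub_le _ _
          _ ≤ 1 + 1 := by rw [hN1]; exact add_le_add le_rfl (hξ1 x)
          _ = 2 := by norm_num
        have hrt : r^2 ≤ 2*t := by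
          have h1 : r^2 = ‖N x‖^2 - 2 * ⟪N x, ξ x⟫ + ‖ξ x‖^2 := by
            rw [hrdef]; exact norm_sub_sq_real _ _
          have h2 : ⟪N x, ξ x⟫ = p := real_inner_comm _ _
          have h3 : ‖ξ x‖^2 ≤ 1 := by
            rw [show (1:ℝ) = 1^2 by norm_num]
            exact pow_le_pow_left₀ (norm_nonneg _) (hξ1 x) 2
          rw [h1, h2, hN1, htdef]; linarith
        calc |⟪fderiv ℝ H x (N x), N x⟫| * (2*b*|b-c|)
            ≤ (Λ * r) * (2*b*|b-c|) :=
              mul_le_mul_of_nonneg_right hfirst (by positivity)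
        _ = Λ * (r * (2*b*|b-c|)) := by ring
        _ ≤ Λ * (8 * ((b-c)^2 + 2*(b*c)*t)) :=
              mul_le_mul_of_nonneg_left (key_near b c t r hb hc ht0 hr0 hr2 hrt) hΛ
        _ ≤ Λ * ((8 + 2/κ') * ((b-c)^2 + 2*(b*c)*t)) := by
              have h8 : (8:ℝ) ≤ 8 + 2/κ' := le_add_of_nonneg_right (by positivity)
              exact mul_le_mul_of_nonneg_left
                (mul_le_mul_of_nonneg_right h8 hX) hΛ
        _ = C * ((b-c)^2 + 2*(b*c)*t) := by rw [hCdef]; ring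
      · -- away from the interface
        have hfirst : |⟪fderiv ℝ H x (N x), N x⟫| ≤ Λ := by
          calc |⟪fderiv ℝ H x (N x), N x⟫|
              ≤ ‖fderiv ℝ H x (N x)‖ * ‖N x‖ := abs_real_inner_le_norm _ _
          _ = ‖fderiv ℝ H x (N x)‖ := by rw [hN1, mul_one]
          _ ≤ ‖fderiv ℝ H x‖ * ‖N x‖ := (fderiv ℝ H x).le_opNorm _
          _ ≤ Λ := by rw [hN1, mul_one]; exact hHΛ x
        have hκt : κ' ≤ t := by
          have h1 : κ' ≤ κ * min (Metric.infDist x I ^ 2) 1 := by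
            rw [hκ'def]
            apply mul_le_mul_of_nonneg_left _ hκ0.le
            exact min_le_min (pow_le_pow_left₀ hδ.le hdist.le 2) le_rfl
          have h2 := hξκ x
          rw [htdef]; linarith
        calc |⟪fderiv ℝ H x (N x), N x⟫| * (2*b*|b-c|)
            ≤ Λ * (2*b*|b-c|) := mul_le_mul_of_nonneg_right hfirst (by positivity)
        _ ≤ Λ * ((6 + 2/κ') * ((b-c)^2 + 2*(b*c)*t)) :=
              mul_le_mul_of_nonneg_left (key_far b c t κ' hb hc hκ'pos hκt) hΛ
        _ ≤ Λ * ((8 + 2/κ') * ((b-c)^2 + 2*(b*c)*t)) := by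
              have h8 : (6:ℝ) + 2/κ' ≤ 8 + 2/κ' := by linarith
              exact mul_le_mul_of_nonneg_left
                (mul_le_mul_of_nonneg_right h8 hX) hΛ
        _ = C * ((b-c)^2 + 2*(b*c)*t) := by rw [hCdef]; ring
  -- measurability and integrability
  have hNm : Measurable N := (hgc.norm.measurable.inv).smul hgc.measurable
  have hAm : Measurable (fun x => fderiv ℝ H x (N x)) := by
    have hcont : Continuous (fun q : (EuclideanSpace ℝ (Fin d) →L[ℝ] EuclideanSpace ℝ (Fin d))
        × EuclideanSpace ℝ (Fin d) => q.1 q.2) := isBoundedBilinearMap_apply.continuous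
    exact hcont.measurable.comp (hfHc.measurable.prodMk hNm)
  have hFm : Measurable F := by
    rw [hFdef]
    exact ((hAm.inner hNm).abs).mul
      (((continuous_const.mul (hgc.norm.pow 2)).sub hψc.norm).abs).measurable
  have hDint : Integrable (fun x => ε / 2 * ‖gradient u x‖ ^ 2 + ε⁻¹ * W (u x)
      - ⟪ξ x, gradPsi W u x⟫) := hEint.sub hξint
  have hFnn : ∀ x, 0 ≤ F x := fun x => mul_nonneg (abs_nonneg _) (abs_nonneg _)
  have hFint : Integrable F := by
    apply (hDint.const_mul C).mono' hFm.aestronglyMeasurable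
    exact ae_of_all _ fun x => by
      rw [Real.norm_eq_abs, abs_of_nonneg (hFnn x)]; exact hpt x
  have hFeq : (fun x => |⟪fderiv ℝ H x (n x), n x⟫|
      * |ε * ‖gradient u x‖ ^ 2 - ‖gradPsi W u x‖|) = F := by
    funext x
    by_cases hg : gradient u x = 0
    · have h2 : |ε * ‖gradient u x‖ ^ 2 - ‖gradPsi W u x‖| = 0 := by
        rw [hnormPsi x, hg]; simp
      rw [hFdef]; dsimp only; rw [h2, mul_zero, mul_zero]
    · rw [hFdef]; dsimp only; rw [hn2 x hg]
  rw [hFeq]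
  calc ∫ x, F x ≤ ∫ x, C * (ε / 2 * ‖gradient u x‖ ^ 2 + ε⁻¹ * W (u x)
      - ⟪ξ x, gradPsi W u x⟫) := integral_mono hFint (hDint.const_mul C) hpt
  _ = C * relEntropy ε W u ξ := by rw [MeasureTheory.integral_const_mul]; rfl
end
end
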